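/- Let F : [0,∞) → ℝ be C¹ with F(0)=0 and F' nonnegative and increasing; let φ : [a,b] → ℝ be C¹ with φ(a)=0 and φ' > 0 on [a,b]; let ϕ : [0,∞) → [0,∞) be convex, increasing, with ϕ(0)=0; and let f : [a,b] → ℝ be C¹ with f(a)=0. Then ∫ₐᵇ F'(φ(x) ϕ(|f(x)|/φ(x))) φ'(x) ϕ(|f'(x)|/φ'(x)) dx ≤ F(∫ₐᵇ φ'(x) ϕ(|f'(x)|/φ'(x)) dx). -/

import Mathlib

open Set MeasureTheory intervalIntegral

/-- Subgradient existence for a convex monotone function on `[0,∞)`. -/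
lemma exists_subgradient_aux (ϕ : ℝ → ℝ) (hconv : ConvexOn ℝ (Set.Ici 0) ϕ)
    (hmono : MonotoneOn ϕ (Set.Ici 0)) {u : ℝ} (hu : 0 ≤ u) :
    ∃ c : ℝ, 0 ≤ c ∧ ∀ s, 0 ≤ s → ϕ u + c * (s - u) ≤ ϕ s := by
  rcases eq_or_lt_of_le hu with rfl | h0
  · refine ⟨0, le_rfl, fun s hs => ?_⟩
    have := hmono (le_refl (0:ℝ)) hs hs
    simpa using this
  · set S : Set ℝ := (fun v => (ϕ u - ϕ v) / (u - v)) '' Set.Ico 0 u with hS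
    have hne : S.Nonempty := ⟨_, ⟨0, ⟨le_rfl, h0⟩, rfl⟩⟩
    have hub : ∀ z ∈ S, z ≤ (ϕ (u+1) - ϕ u) / (u + 1 - u) := by
      rintro z ⟨v, hv, rfl⟩
      exact hconv.slope_mono_adjacent hv.1 (by simp only [Set.mem_Ici]; linarith) hv.2 (by linarith)
    have hbdd : BddAbove S := ⟨_, hub⟩
    set c := sSup S with hc
    have hc0 : 0 ≤ c := by
      have h0S : (ϕ u - ϕ 0) / (u - 0) ∈ S := ⟨0, ⟨le_rfl, h0⟩, rfl⟩
      have h1 : 0 ≤ (ϕ u - ϕ 0) / (u - 0) := by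
        apply div_nonneg _ (by linarith)
        have := hmono (le_refl (0:ℝ)) h0.le h0.le
        linarith
      exact h1.trans (le_csSup hbdd h0S)
    refine ⟨c, hc0, fun s hs => ?_⟩
    rcases lt_trichotomy s u with hsu | rfl | hus
    · have hmem : (ϕ u - ϕ s) / (u - s) ∈ S := ⟨s, ⟨hs, hsu⟩, rfl⟩
      have hle : (ϕ u - ϕ s) / (u - s) ≤ c := le_csSup hbdd hmem
      have h1 : c * (s - u) ≤ ((ϕ u - ϕ s) / (u - s)) * (s - u) := by
        apply mul_le_mul_of_nonpos_right hle (by linarith)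
      have h2 : ((ϕ u - ϕ s) / (u - s)) * (s - u) = -(ϕ u - ϕ s) := by
        rw [div_mul_eq_mul_div, div_eq_iff (by linarith : u - s ≠ 0)]
        ring
      linarith
    · simp
    · have hle : c ≤ (ϕ s - ϕ u) / (s - u) := by
        apply csSup_le hne
        rintro z ⟨v, hv, rfl⟩
        exact hconv.slope_mono_adjacent hv.1 hs hv.2 hus
      have h1 : c * (s - u) ≤ ((ϕ s - ϕ u) / (s - u)) * (s - u) :=
        mul_le_mul_of_nonneg_right hle (by linarith)
      have h2 : ((ϕ s - ϕ u) / (s - u)) * (s - u) = ϕ s - ϕ u := by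
        rw [div_mul_eq_mul_div, div_eq_iff (by linarith : s - u ≠ 0)]
      linarith

/-- A convex monotone function on `[0,∞)` is continuous on `[0,∞)`. -/
lemma continuousOn_of_convexOn_monotoneOn (ϕ : ℝ → ℝ) (hconv : ConvexOn ℝ (Set.Ici 0) ϕ)
    (hmono : MonotoneOn ϕ (Set.Ici 0)) : ContinuousOn ϕ (Set.Ici 0) := by
  have hint : ContinuousOn ϕ (Set.Ioi 0) := by
    have := hconv.continuousOn_interior
    rwa [interior_Ici] at this
  intro x hx
  rcases eq_or_lt_of_le (Set.mem_Ici.mp hx) with h0 | h0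
  · subst h0
    -- squeeze at 0
    have hupper : ∀ y ∈ Set.Icc (0:ℝ) 1, ϕ y ≤ ϕ 0 + y * (ϕ 1 - ϕ 0) := by
      intro y hy
      have := hconv.2 (le_refl (0:ℝ)) (by norm_num : (1:ℝ) ∈ Set.Ici 0)
        (by linarith [hy.2] : 0 ≤ 1 - y) hy.1 (by ring)
      simp only [smul_eq_mul, mul_zero, mul_one, zero_add] at this
      -- this : ϕ ((1-y) * 0 + y * 1) ≤ (1-y) * ϕ 0 + y * ϕ 1
      calc ϕ y ≤ (1 - y) * ϕ 0 + y * ϕ 1 := by simpa using this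
        _ = ϕ 0 + y * (ϕ 1 - ϕ 0) := by ring
    have hlower : ∀ y ∈ Set.Ici (0:ℝ), ϕ 0 ≤ ϕ y := fun y hy =>
      hmono (le_refl (0:ℝ)) hy hy
    rw [ContinuousWithinAt]
    have hev1 : ∀ᶠ y in nhdsWithin 0 (Set.Ici 0), ϕ y ≤ ϕ 0 + y * (ϕ 1 - ϕ 0) := by
      filter_upwards [Filter.inter_mem (nhdsWithin_le_nhds (Icc_mem_nhds (by norm_num : (-1:ℝ) < 0) (by norm_num : (0:ℝ) < 1))) self_mem_nhdsWithin] with y hy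
      exact hupper y ⟨hy.2, hy.1.2⟩
    have hev2 : ∀ᶠ y in nhdsWithin 0 (Set.Ici 0), ϕ 0 ≤ ϕ y := by
      filter_upwards [self_mem_nhdsWithin] with y hy
      exact hlower y hy
    have hlim : Filter.Tendsto (fun y : ℝ => ϕ 0 + y * (ϕ 1 - ϕ 0)) (nhdsWithin 0 (Set.Ici 0)) (nhds (ϕ 0)) := by
      have : Filter.Tendsto (fun y : ℝ => ϕ 0 + y * (ϕ 1 - ϕ 0)) (nhds 0) (nhds (ϕ 0 + 0 * (ϕ 1 - ϕ 0))) := by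
        exact (tendsto_const_nhds.add ((Filter.tendsto_id).mul tendsto_const_nhds))
      simpa using this.mono_left nhdsWithin_le_nhds
    exact tendsto_of_tendsto_of_tendsto_of_le_of_le' tendsto_const_nhds hlim hev2 hev1
  · exact ((hint x h0).continuousAt (Ioi_mem_nhds h0)).continuousWithinAt

/-- One-dimensional real case of Theorem 3.20 (Rozanova-type inequality):
with `F ∈ ℋ¹_∞` (i.e. `F` is `C¹` on `[0,∞)`, `F 0 = 0`, `F'` nonnegative and
increasing), `φ` C¹ with `φ a = 0` and `φ' > 0`, `ϕ` convex increasing with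
`ϕ 0 = 0`, and `f` C¹ with `f a = 0`, one has
`∫ₐᵇ F'(φ ϕ(|f|/φ)) φ' ϕ(|f'|/φ') ≤ F (∫ₐᵇ φ' ϕ(|f'|/φ'))`. -/
theorem rozanova_type (a b : ℝ) (hab : a < b)
    (F F' : ℝ → ℝ)
    (hFderiv : ∀ x ∈ Set.Ici (0 : ℝ), HasDerivAt F (F' x) x)
    (hF'cont : ContinuousOn F' (Set.Ici (0 : ℝ)))
    (hF0 : F 0 = 0)
    (hF'nonneg : ∀ x ∈ Set.Ici (0 : ℝ), 0 ≤ F' x)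
    (hF'mono : MonotoneOn F' (Set.Ici (0 : ℝ)))
    (φ φ' : ℝ → ℝ)
    (hφ : ∀ x ∈ Set.Icc a b, HasDerivAt φ (φ' x) x)
    (hφ'cont : ContinuousOn φ' (Set.Icc a b))
    (hφa : φ a = 0)
    (hφ'pos : ∀ x ∈ Set.Icc a b, 0 < φ' x)
    (ϕ : ℝ → ℝ)
    (hϕconv : ConvexOn ℝ (Set.Ici (0 : ℝ)) ϕ)
    (hϕmono : MonotoneOn ϕ (Set.Ici (0 : ℝ)))
    (hϕ0 : ϕ 0 = 0)
    (hϕnonneg : ∀ x ∈ Set.Ici (0 : ℝ), 0 ≤ ϕ x)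
    (f f' : ℝ → ℝ)
    (hf : ∀ x ∈ Set.Icc a b, HasDerivAt f (f' x) x)
    (hf'cont : ContinuousOn f' (Set.Icc a b))
    (hfa : f a = 0) :
    ∫ x in a..b, F' (φ x * ϕ (|f x| / φ x)) * (φ' x * ϕ (|f' x| / φ' x)) ≤
      F (∫ x in a..b, φ' x * ϕ (|f' x| / φ' x)) := by
  have hφcont : ContinuousOn φ (Set.Icc a b) := fun x hx =>
    (hφ x hx).continuousAt.continuousWithinAt
  have hfcont : ContinuousOn f (Set.Icc a b) := fun x hx =>
    (hf x hx).continuousAt.continuousWithinAt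
  have hϕcont : ContinuousOn ϕ (Set.Ici 0) :=
    continuousOn_of_convexOn_monotoneOn ϕ hϕconv hϕmono
  have hFcont : ContinuousOn F (Set.Ici 0) := fun x hx =>
    (hFderiv x hx).continuousAt.continuousWithinAt
  set w : ℝ → ℝ := fun t => φ' t * ϕ (|f' t| / φ' t) with hw_def
  have hs_nonneg : ∀ t ∈ Set.Icc a b, 0 ≤ |f' t| / φ' t := fun t ht =>
    div_nonneg (abs_nonneg _) (hφ'pos t ht).le
  have hwcont : ContinuousOn w (Set.Icc a b) := by
    apply hφ'cont.mul
    exact hϕcont.comp (hf'cont.abs.div hφ'cont (fun t ht => (hφ'pos t ht).ne')) hs_nonneg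
  have hwnonneg : ∀ t ∈ Set.Icc a b, 0 ≤ w t := fun t ht =>
    mul_nonneg (hφ'pos t ht).le (hϕnonneg _ (hs_nonneg t ht))
  have hwint : ∀ x ∈ Set.Icc a b, IntervalIntegrable w volume a x := by
    intro x hx
    apply ContinuousOn.intervalIntegrable
    rw [Set.uIcc_of_le hx.1]
    exact hwcont.mono (Set.Icc_subset_Icc le_rfl hx.2)
  set G : ℝ → ℝ := fun x => ∫ t in a..x, w t with hG_def
  -- FTC for φ and f
  have hφint : ∀ x ∈ Set.Icc a b, IntervalIntegrable φ' volume a x := by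
    intro x hx
    apply ContinuousOn.intervalIntegrable
    rw [Set.uIcc_of_le hx.1]
    exact hφ'cont.mono (Set.Icc_subset_Icc le_rfl hx.2)
  have hf'int : ∀ x ∈ Set.Icc a b, IntervalIntegrable f' volume a x := by
    intro x hx
    apply ContinuousOn.intervalIntegrable
    rw [Set.uIcc_of_le hx.1]
    exact hf'cont.mono (Set.Icc_subset_Icc le_rfl hx.2)
  have hsub : ∀ x ∈ Set.Icc a b, Set.uIcc a x ⊆ Set.Icc a b := by
    intro x hx
    rw [Set.uIcc_of_le hx.1]
    exact Set.Icc_subset_Icc le_rfl hx.2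
  have hφeq : ∀ x ∈ Set.Icc a b, φ x = ∫ t in a..x, φ' t := by
    intro x hx
    have h := intervalIntegral.integral_eq_sub_of_hasDerivAt
      (fun t ht => hφ t (hsub x hx ht)) (hφint x hx)
    rw [h, hφa, sub_zero]
  have hfeq : ∀ x ∈ Set.Icc a b, f x = ∫ t in a..x, f' t := by
    intro x hx
    have h := intervalIntegral.integral_eq_sub_of_hasDerivAt
      (fun t ht => hf t (hsub x hx ht)) (hf'int x hx)
    rw [h, hfa, sub_zero]
  have hφnonneg : ∀ x ∈ Set.Icc a b, 0 ≤ φ x := by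
    intro x hx
    rw [hφeq x hx]
    apply intervalIntegral.integral_nonneg hx.1
    intro t ht
    exact (hφ'pos t ⟨ht.1, ht.2.trans hx.2⟩).le
  have hφpos : ∀ x ∈ Set.Icc a b, a < x → 0 < φ x := by
    intro x hx hax
    rw [hφeq x hx]
    apply intervalIntegral.intervalIntegral_pos_of_pos_on (hφint x hx)
      (fun t ht => hφ'pos t ⟨ht.1.le, ht.2.le.trans hx.2⟩) hax
  have hGa : G a = 0 := intervalIntegral.integral_same
  have hGnonneg : ∀ x ∈ Set.Icc a b, 0 ≤ G x := by
    intro x hx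
    apply intervalIntegral.integral_nonneg hx.1
    intro t ht
    exact hwnonneg t ⟨ht.1, ht.2.trans hx.2⟩
  have hGleb : ∀ x ∈ Set.Icc a b, G x ≤ G b := by
    intro x hx
    have hsplit : G x + ∫ t in x..b, w t = G b := by
      apply intervalIntegral.integral_add_adjacent_intervals (hwint x hx)
      apply ContinuousOn.intervalIntegrable
      rw [Set.uIcc_of_le hx.2]
      exact hwcont.mono (Set.Icc_subset_Icc hx.1 le_rfl)
    have hnn : 0 ≤ ∫ t in x..b, w t := by
      apply intervalIntegral.integral_nonneg hx.2
      intro t ht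
      exact hwnonneg t ⟨hx.1.trans ht.1, ht.2⟩
    linarith
  have hGcont : ContinuousOn G (Set.Icc a b) := by
    have := intervalIntegral.continuousOn_primitive_interval
      (μ := volume) (f := w) (a := a) (b := b) ?_
    · rwa [Set.uIcc_of_le hab.le] at this
    · rw [Set.uIcc_of_le hab.le]
      exact hwcont.integrableOn_compact isCompact_Icc
  -- key pointwise Jensen-type estimate
  have key : ∀ x ∈ Set.Icc a b, φ x * ϕ (|f x| / φ x) ≤ G x := by
    intro x hx
    rcases eq_or_lt_of_le hx.1 with rfl | hax
    · rw [hφa, hGa, zero_mul]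
    · have hφx : 0 < φ x := hφpos x hx hax
      set u := |f x| / φ x with hu_def
      have hu0 : 0 ≤ u := div_nonneg (abs_nonneg _) hφx.le
      obtain ⟨c, hc0, hc⟩ := exists_subgradient_aux ϕ hϕconv hϕmono hu0
      have hmemsub : ∀ t ∈ Set.Icc a x, t ∈ Set.Icc a b := fun t ht => ⟨ht.1, ht.2.trans hx.2⟩
      set g : ℝ → ℝ := fun t => (ϕ u - c * u) * φ' t + c * |f' t| with hg_def
      have hgle : ∀ t ∈ Set.Icc a x, g t ≤ w t := by
        intro t ht
        have htb := hmemsub t ht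
        have h1 := hc _ (hs_nonneg t htb)
        have h2 : φ' t * (ϕ u + c * (|f' t| / φ' t - u)) ≤ w t :=
          mul_le_mul_of_nonneg_left h1 (hφ'pos t htb).le
        have h3 : φ' t * (|f' t| / φ' t) = |f' t| := mul_div_cancel₀ _ (hφ'pos t htb).ne'
        have h4 : φ' t * (ϕ u + c * (|f' t| / φ' t - u))
            = (ϕ u - c * u) * φ' t + c * (φ' t * (|f' t| / φ' t)) := by ring
        rw [h4, h3] at h2
        exact h2
      have hgint : IntervalIntegrable g volume a x :=
        ((hφint x hx).const_mul _).add ((hf'int x hx).abs.const_mul _)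
      have hmono_int : ∫ t in a..x, g t ≤ G x :=
        intervalIntegral.integral_mono_on hax.le hgint (hwint x hx) hgle
      have hgval : ∫ t in a..x, g t = (ϕ u - c * u) * φ x + c * ∫ t in a..x, |f' t| := by
        rw [hg_def]
        rw [intervalIntegral.integral_add ((hφint x hx).const_mul _)
          ((hf'int x hx).abs.const_mul _), intervalIntegral.integral_const_mul,
          intervalIntegral.integral_const_mul, ← hφeq x hx]
      have habs : |f x| ≤ ∫ t in a..x, |f' t| := by
        rw [hfeq x hx]
        exact intervalIntegral.abs_integral_le_integral_abs hax.le
      have huφ : u * φ x = |f x| := div_mul_cancel₀ _ hφx.ne'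
      have h5 : c * (u * φ x) ≤ c * ∫ t in a..x, |f' t| := by
        apply mul_le_mul_of_nonneg_left _ hc0
        rw [huφ]
        exact habs
      rw [hgval] at hmono_int
      nlinarith [hmono_int, h5]
  -- FTC-2 for F ∘ G
  have hGb_mem : G b ∈ Set.Ici (0 : ℝ) := hGnonneg b ⟨hab.le, le_rfl⟩
  have hRHSint : IntervalIntegrable (fun x => F' (G x) * w x) volume a b := by
    apply ContinuousOn.intervalIntegrable
    rw [Set.uIcc_of_le hab.le]
    exact (hF'cont.comp hGcont hGnonneg).mul hwcont
  have hFTC : ∫ x in a..b, F' (G x) * w x = F (G b) := by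
    have hderiv : ∀ x ∈ Set.Ioo a b, HasDerivWithinAt (F ∘ G) (F' (G x) * w x) (Set.Ioi x) x := by
      intro x hx
      have hxm : x ∈ Set.Icc a b := ⟨hx.1.le, hx.2.le⟩
      have hxmem : Set.Icc a b ∈ nhds x := Icc_mem_nhds hx.1 hx.2
      have hcw : ContinuousAt w x := hwcont.continuousAt hxmem
      have hGd : HasDerivAt G (w x) x := by
        apply intervalIntegral.integral_hasDerivAt_right (hwint x hxm)
          ⟨Set.Icc a b, hxmem, hwcont.aestronglyMeasurable measurableSet_Icc⟩ hcw
      exact ((hFderiv (G x) (hGnonneg x hxm)).comp x hGd).hasDerivWithinAt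
    have hcont : ContinuousOn (F ∘ G) (Set.Icc a b) := hFcont.comp hGcont hGnonneg
    have h := intervalIntegral.integral_eq_sub_of_hasDeriv_right_of_le hab.le hcont hderiv hRHSint
    rw [h]
    simp only [Function.comp_apply, hGa, hF0, sub_zero]
  -- Integrability of the left-hand side
  have hLHSint : IntervalIntegrable (fun x => F' (φ x * ϕ (|f x| / φ x)) * w x) volume a b := by
    rw [intervalIntegrable_iff_integrableOn_Icc_of_le hab.le]
    have hψ : Measurable fun y : ℝ => ϕ (max y 0) := by
      apply Monotone.measurable
      intro y z hyz
      exact hϕmono (le_max_right y 0) (le_max_right z 0) (max_le_max hyz le_rfl)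
    have hF'' : Measurable fun y : ℝ => F' (max y 0) := by
      apply Monotone.measurable
      intro y z hyz
      exact hF'mono (le_max_right y 0) (le_max_right z 0) (max_le_max hyz le_rfl)
    have hφm : AEMeasurable φ (volume.restrict (Set.Icc a b)) :=
      hφcont.aemeasurable measurableSet_Icc
    have hfm : AEMeasurable f (volume.restrict (Set.Icc a b)) :=
      hfcont.aemeasurable measurableSet_Icc
    have hφ'm : AEMeasurable φ' (volume.restrict (Set.Icc a b)) :=
      hφ'cont.aemeasurable measurableSet_Icc
    have hf'm : AEMeasurable f' (volume.restrict (Set.Icc a b)) :=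
      hf'cont.aemeasurable measurableSet_Icc
    have hq1 : AEMeasurable (fun x => |f x| / φ x) (volume.restrict (Set.Icc a b)) :=
      (measurable_abs.comp_aemeasurable hfm).div hφm
    have hq2 : AEMeasurable (fun x => |f' x| / φ' x) (volume.restrict (Set.Icc a b)) :=
      (measurable_abs.comp_aemeasurable hf'm).div hφ'm
    have hH : AEMeasurable
        (fun x => F' (max (φ x * ϕ (max (|f x| / φ x) 0)) 0) * (φ' x * ϕ (max (|f' x| / φ' x) 0)))
        (volume.restrict (Set.Icc a b)) :=
      (hF''.comp_aemeasurable (hφm.mul (hψ.comp_aemeasurable hq1))).mul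
        (hφ'm.mul (hψ.comp_aemeasurable hq2))
    have heq : ∀ x ∈ Set.Icc a b,
        F' (max (φ x * ϕ (max (|f x| / φ x) 0)) 0) * (φ' x * ϕ (max (|f' x| / φ' x) 0))
          = F' (φ x * ϕ (|f x| / φ x)) * w x := by
      intro x hx
      have h1 : 0 ≤ |f x| / φ x := div_nonneg (abs_nonneg _) (hφnonneg x hx)
      have h2 : 0 ≤ φ x * ϕ (|f x| / φ x) := mul_nonneg (hφnonneg x hx) (hϕnonneg _ h1)
      rw [max_eq_left h1, max_eq_left (hs_nonneg x hx), max_eq_left h2]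
    have hmeas : AEStronglyMeasurable (fun x => F' (φ x * ϕ (|f x| / φ x)) * w x)
        (volume.restrict (Set.Icc a b)) := by
      apply hH.aestronglyMeasurable.congr
      filter_upwards [ae_restrict_mem measurableSet_Icc] with x hx
      exact heq x hx
    have hwb : IntegrableOn (fun x => F' (G b) * w x) (Set.Icc a b) volume :=
      (continuousOn_const.mul hwcont).integrableOn_compact isCompact_Icc
    apply hwb.mono' hmeas
    filter_upwards [ae_restrict_mem measurableSet_Icc] with x hx
    have h1 : 0 ≤ |f x| / φ x := div_nonneg (abs_nonneg _) (hφnonneg x hx)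
    have h2 : 0 ≤ φ x * ϕ (|f x| / φ x) := mul_nonneg (hφnonneg x hx) (hϕnonneg _ h1)
    rw [Real.norm_eq_abs, abs_of_nonneg (mul_nonneg (hF'nonneg _ h2) (hwnonneg x hx))]
    exact mul_le_mul_of_nonneg_right
      (hF'mono h2 hGb_mem ((key x hx).trans (hGleb x hx))) (hwnonneg x hx)
  -- pointwise comparison and conclusion
  have hmono_final : ∫ x in a..b, F' (φ x * ϕ (|f x| / φ x)) * w x
      ≤ ∫ x in a..b, F' (G x) * w x := by
    apply intervalIntegral.integral_mono_on hab.le hLHSint hRHSint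
    intro x hx
    have h1 : 0 ≤ |f x| / φ x := div_nonneg (abs_nonneg _) (hφnonneg x hx)
    have h2 : 0 ≤ φ x * ϕ (|f x| / φ x) := mul_nonneg (hφnonneg x hx) (hϕnonneg _ h1)
    exact mul_le_mul_of_nonneg_right
      (hF'mono h2 (hGnonneg x hx) (key x hx)) (hwnonneg x hx)
  calc ∫ x in a..b, F' (φ x * ϕ (|f x| / φ x)) * w x
      ≤ ∫ x in a..b, F' (G x) * w x := hmono_final
    _ = F (G b) := hFTC
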